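/- Let a, b be polynomials in ℂ[X] with a ≠ b. A bivariate polynomial c(∂,λ) ∈ ℂ[∂,λ] satisfies c(∂,λ)b(μ) + c(∂+λ,μ)a(λ) − c(∂,μ)b(λ) − c(∂+μ,λ)a(μ) = 0 for all ∂, λ, μ ∈ ℂ if and only if there exists a polynomial φ ∈ ℂ[X] such that c(∂,λ) = a(λ)φ(∂+λ) − b(λ)φ(∂). -/

import Mathlib

/-- Evaluation of a bivariate polynomial c(∂,λ) at a pair of complex numbers. -/
noncomputable def ev2 (c : MvPolynomial (Fin 2) ℂ) (x y : ℂ) : ℂ :=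
  MvPolynomial.eval ![x, y] c

open Polynomial

/-- Key coefficient computation for the operator T φ = C A * φ.comp (X + C t) - C B * φ. -/
lemma coeff_Top (A B t : ℂ) (p : Polynomial ℂ) :
    (C A * p.comp (X + C t) - C B * p).coeff p.natDegree
      = (A - B) * p.leadingCoeff := by
  have h1 : (p.comp (X + C t)).natDegree = p.natDegree := by
    simp [natDegree_comp]
  have h2 : (p.comp (X + C t)).coeff p.natDegree = p.leadingCoeff := by
    rw [← h1, coeff_natDegree, leadingCoeff_comp (by simp)]
    simp [leadingCoeff_X_add_C]
  simp [coeff_sub, coeff_C_mul, h2, coeff_natDegree]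
  ring

lemma natDegree_Top_le (A B t : ℂ) (p : Polynomial ℂ) :
    (C A * p.comp (X + C t) - C B * p).natDegree ≤ p.natDegree := by
  have h1 : (p.comp (X + C t)).natDegree = p.natDegree := by
    simp [natDegree_comp]
  refine (natDegree_sub_le _ _).trans ?_
  simp only [sup_le_iff]
  exact ⟨(natDegree_C_mul_le _ _).trans h1.le, natDegree_C_mul_le _ _⟩

/-- Injectivity of T. -/
lemma Top_inj (A B t : ℂ) (hAB : A ≠ B) (p : Polynomial ℂ)
    (h : C A * p.comp (X + C t) - C B * p = 0) : p = 0 := by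
  have := coeff_Top A B t p
  rw [h] at this
  simp only [coeff_zero] at this
  have : p.leadingCoeff = 0 := by
    rcases mul_eq_zero.mp this.symm with h' | h'
    · exact absurd (sub_eq_zero.mp h') hAB
    · exact h'
  exact leadingCoeff_eq_zero.mp this

/-- Surjectivity of T. -/
lemma Top_surj (A B t : ℂ) (hAB : A ≠ B) :
    ∀ n (p : Polynomial ℂ), p.natDegree ≤ n →
      ∃ φ : Polynomial ℂ, C A * φ.comp (X + C t) - C B * φ = p := by
  intro n
  induction n using Nat.strong_induction_on with
  | _ n ih =>
    intro p hp
    by_cases hp0 : p = 0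
    · exact ⟨0, by simp [hp0]⟩
    set ψ : Polynomial ℂ := C ((A - B)⁻¹ * p.leadingCoeff) * X ^ p.natDegree with hψ
    have hψdeg : ψ.natDegree = p.natDegree := by
      rw [hψ, natDegree_C_mul (by
        exact mul_ne_zero (inv_ne_zero (sub_ne_zero.mpr hAB))
          (leadingCoeff_ne_zero.mpr hp0)), natDegree_X_pow]
    have hψlc : ψ.leadingCoeff = (A - B)⁻¹ * p.leadingCoeff := by
      rw [hψ]
      simp [leadingCoeff_C_mul_X_pow]
    set r := p - (C A * ψ.comp (X + C t) - C B * ψ) with hr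
    have hrc : r.coeff p.natDegree = 0 := by
      rw [hr, coeff_sub]
      have := coeff_Top A B t ψ
      rw [hψdeg, hψlc] at this
      rw [this, coeff_natDegree]
      field_simp [sub_ne_zero.mpr hAB]
      ring
    have hrd : r.natDegree ≤ p.natDegree := by
      refine (natDegree_sub_le _ _).trans ?_
      simp only [sup_le_iff]
      exact ⟨le_rfl, (natDegree_Top_le A B t ψ).trans hψdeg.le⟩
    by_cases hr0 : r = 0
    · exact ⟨ψ, by rw [hr] at hr0; linear_combination -hr0⟩
    · have hrlt : r.natDegree < p.natDegree := by
        rcases lt_or_eq_of_le hrd with h | h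
        · exact h
        · exfalso
          apply hr0
          apply leadingCoeff_eq_zero.mp
          rw [← coeff_natDegree, h, hrc]
      obtain ⟨φ₁, hφ₁⟩ := ih r.natDegree (lt_of_lt_of_le hrlt hp) r le_rfl
      refine ⟨ψ + φ₁, ?_⟩
      rw [add_comp]
      rw [hr] at hφ₁
      linear_combination hφ₁

lemma eval_aeval2 (c : MvPolynomial (Fin 2) ℂ) (m x : ℂ) :
    (MvPolynomial.aeval ![Polynomial.X, Polynomial.C m] c).eval x
      = ev2 c x m := by
  unfold ev2
  induction c using MvPolynomial.induction_on with
  | C a => simp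
  | add p q hp hq => simp [hp, hq]
  | mul_X p i hp => fin_cases i <;> simp [hp]

/-- For polynomials a ≠ b, a bivariate polynomial c(∂,λ) satisfies
c(∂,λ)b(μ) + c(∂+λ,μ)a(λ) − c(∂,μ)b(λ) − c(∂+μ,λ)a(μ) = 0 iff
c(∂,λ) = a(λ)φ(∂+λ) − b(λ)φ(∂) for some polynomial φ. -/
theorem stmt_2 (a b : Polynomial ℂ) (hab : a ≠ b) (c : MvPolynomial (Fin 2) ℂ) :
    (∀ x l m : ℂ,
      ev2 c x l * b.eval m + ev2 c (x + l) m * a.eval l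
        - ev2 c x m * b.eval l - ev2 c (x + m) l * a.eval m = 0) ↔
    (∃ φ : Polynomial ℂ, ∀ x y : ℂ,
      ev2 c x y = a.eval y * φ.eval (x + y) - b.eval y * φ.eval x) := by
  constructor
  · intro hc
    -- pick t with a(t) ≠ b(t)
    obtain ⟨t, ht⟩ : ∃ t : ℂ, a.eval t ≠ b.eval t := by
      by_contra h
      push_neg at h
      exact hab (Polynomial.funext h)
    set A := a.eval t with hA
    set B := b.eval t with hB
    -- solve difference equation for φ
    obtain ⟨φ, hφ⟩ := Top_surj A B t ht
      (MvPolynomial.aeval ![Polynomial.X, Polynomial.C t] c).natDegree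
      (MvPolynomial.aeval ![Polynomial.X, Polynomial.C t] c) le_rfl
    have hct : ∀ x : ℂ, ev2 c x t = A * φ.eval (x + t) - B * φ.eval x := by
      intro x
      have := congrArg (Polynomial.eval x) hφ
      simpa [eval_comp, eval_aeval2] using this.symm
    refine ⟨φ, ?_⟩
    -- for each m, the defect polynomial Gm vanishes
    have key : ∀ m : ℂ,
        (MvPolynomial.aeval ![Polynomial.X, Polynomial.C m] c
          - (C (a.eval m) * φ.comp (X + C m) - C (b.eval m) * φ)) = 0 := by
      intro m
      set G := MvPolynomial.aeval ![Polynomial.X, Polynomial.C m] c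
        - (C (a.eval m) * φ.comp (X + C m) - C (b.eval m) * φ) with hG
      have hGeval : ∀ x : ℂ, G.eval x
          = ev2 c x m - (a.eval m * φ.eval (x + m) - b.eval m * φ.eval x) := by
        intro x
        rw [hG]
        simp [eval_comp, eval_aeval2]
      apply Top_inj A B t ht
      apply Polynomial.funext
      intro x
      have h1 := hc x t m
      have h2 := hct x
      have h3 := hct (x + m)
      have e1 : x + m + t = x + t + m := by ring
      rw [e1] at h3
      simp only [eval_sub, eval_mul, eval_comp, eval_add, eval_X, eval_C, eval_zero]
      rw [hGeval (x + t), hGeval x]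
      linear_combination h1 - eval m b * h2 + eval m a * h3
    intro x y
    have := congrArg (Polynomial.eval x) (key y)
    simp only [eval_sub, eval_mul, eval_comp, eval_add, eval_X, eval_C, eval_zero,
      eval_aeval2] at this
    linear_combination this
  · rintro ⟨φ, hφ⟩ x l m
    rw [hφ x l, hφ (x + l) m, hφ x m, hφ (x + m) l]
    have e1 : x + m + l = x + l + m := by ring
    rw [e1]
    ring
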